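/- With D̂ the optimal 2×2 scaling for a full-rank L ∈ ℝ^{2n×2} (entries ĉ = ‖L₂‖₂/(det LᵀL)^{1/4}, f̂ = −L₁ᵀL₂/(‖L₂‖₂ (det LᵀL)^{1/4})), the spectral condition number of D̂ equals κ₂(D̂) = (‖L‖_F² + √(‖L‖_F⁴ − 4 det(LᵀL))) / (2√(det(LᵀL))), and the Frobenius condition number equals κ_F(D̂) = ‖L‖_F² / √(det(LᵀL)). -/

import Mathlib

open Matrix

noncomputable def euclNorm {m : ℕ} (v : Fin m → ℝ) : ℝ := Real.sqrt (∑ i, v i ^ 2)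

noncomputable def frob {m n : ℕ} (A : Matrix (Fin m) (Fin n) ℝ) : ℝ :=
  Real.sqrt (∑ i, ∑ j, A i j ^ 2)

noncomputable def specNorm {m n : ℕ} (A : Matrix (Fin m) (Fin n) ℝ) : ℝ :=
  ‖(Matrix.toEuclideanLin A).toContinuousLinearMap‖

theorem Matrix.isHermitian_transpose_mul_self {m k : Type*} [Fintype m]
    (A : Matrix m k ℝ) : (Aᵀ * A).IsHermitian := by
  have h := Matrix.isHermitian_conjTranspose_mul_self A
  rwa [Matrix.conjTranspose_eq_transpose_of_trivial] at h

noncomputable def sigmaMax (B : Matrix (Fin 2) (Fin 2) ℝ) : ℝ :=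
  Real.sqrt (max ((Matrix.isHermitian_transpose_mul_self B).eigenvalues 0)
                 ((Matrix.isHermitian_transpose_mul_self B).eigenvalues 1))

noncomputable def sigmaMin (B : Matrix (Fin 2) (Fin 2) ℝ) : ℝ :=
  Real.sqrt (min ((Matrix.isHermitian_transpose_mul_self B).eigenvalues 0)
                 ((Matrix.isHermitian_transpose_mul_self B).eigenvalues 1))

lemma trace_eq_eigen2 {A : Matrix (Fin 2) (Fin 2) ℝ} (hA : A.IsHermitian) :
    A.trace = hA.eigenvalues 0 + hA.eigenvalues 1 := by
  rw [hA.trace_eq_sum_eigenvalues]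
  simp [Matrix.trace_diagonal, Fin.sum_univ_two]

lemma det_eq_eigen2 {A : Matrix (Fin 2) (Fin 2) ℝ} (hA : A.IsHermitian) :
    A.det = hA.eigenvalues 0 * hA.eigenvalues 1 := by
  rw [hA.det_eq_prod_eigenvalues]
  simp [Fin.prod_univ_two]

theorem cond_of_optimal_scaling {n : ℕ} (L : Matrix (Fin (2*n)) (Fin 2) ℝ)
    (hLI : LinearIndependent ℝ ![fun i => L i 0, fun i => L i 1])
    (cop fop : ℝ)
    (hc : cop = euclNorm (fun i => L i 1) / Real.sqrt (Real.sqrt (Lᵀ * L).det))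
    (hf : fop = -(∑ i, L i 0 * L i 1) /
        (euclNorm (fun i => L i 1) * Real.sqrt (Real.sqrt (Lᵀ * L).det))) :
    sigmaMax !![cop, fop; 0, cop⁻¹] / sigmaMin !![cop, fop; 0, cop⁻¹] =
      (frob L ^ 2 + Real.sqrt (frob L ^ 4 - 4 * (Lᵀ * L).det)) /
        (2 * Real.sqrt (Lᵀ * L).det) ∧
    frob !![cop, fop; 0, cop⁻¹] * frob (!![cop, fop; 0, cop⁻¹] : Matrix (Fin 2) (Fin 2) ℝ)⁻¹ =
      frob L ^ 2 / Real.sqrt (Lᵀ * L).det := by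
  classical
  set a2 : ℝ := ∑ i, L i 0 ^ 2 with ha2
  set b2 : ℝ := ∑ i, L i 1 ^ 2 with hb2
  set p : ℝ := ∑ i, L i 0 * L i 1 with hp
  -- Positive definiteness of the Gram matrix
  have hPD : (Lᵀ * L).PosDef := by
    rw [Matrix.posDef_iff_dotProduct_mulVec]
    constructor
    · rw [← Matrix.conjTranspose_eq_transpose_of_trivial]
      exact Matrix.isHermitian_transpose_mul_self L
    · intro x hx
      have hLx : L *ᵥ x ≠ 0 := by
        intro h0
        apply hx
        have := Fintype.linearIndependent_iff.mp hLI x ?_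
        · funext j; exact this j
        · funext k
          have := congrFun h0 k
          simp only [Matrix.mulVec, dotProduct, Fin.sum_univ_two,
            Pi.zero_apply] at this
          simp only [Fin.sum_univ_two, Matrix.cons_val_zero, Matrix.cons_val_one,
            Matrix.head_cons, Pi.add_apply, Pi.smul_apply, smul_eq_mul, Pi.zero_apply]
          linarith [this]
      have key : dotProduct (star x) ((Lᵀ * L) *ᵥ x) = ∑ i, (L *ᵥ x) i ^ 2 := by
        rw [← Matrix.mulVec_mulVec, Matrix.dotProduct_mulVec]
        have hs : star x = x := by funext i; simp
        rw [hs, Matrix.vecMul_transpose]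
        simp [dotProduct, pow_two]
      rw [key]
      have hpos : 0 < ∑ i, (L *ᵥ x) i ^ 2 := by
        rcases Function.ne_iff.mp hLx with ⟨i, hi⟩
        apply Finset.sum_pos' (fun j _ => sq_nonneg _)
        refine ⟨i, Finset.mem_univ i, ?_⟩
        have hi' : (L *ᵥ x) i ≠ 0 := by simpa using hi
        have := abs_pos.mpr hi'
        nlinarith [sq_abs ((L *ᵥ x) i)]
      exact hpos
  have hdetpos : 0 < (Lᵀ * L).det := hPD.det_pos
  have hdet : (Lᵀ * L).det = a2 * b2 - p ^ 2 := by
    have e1 : (∑ i, L i 0 * L i 0) = a2 := by rw [ha2]; simp [pow_two]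
    have e2 : (∑ i, L i 1 * L i 1) = b2 := by rw [hb2]; simp [pow_two]
    have e3 : (∑ i, L i 1 * L i 0) = p := by rw [hp]; simp [mul_comm]
    have e4 : (∑ i, L i 0 * L i 1) = p := hp.symm
    rw [Matrix.det_fin_two]
    simp only [Matrix.mul_apply, Matrix.transpose_apply]
    rw [e1, e2, e3, e4]; ring
  set dd : ℝ := Real.sqrt (Lᵀ * L).det with hdd
  have hddpos : 0 < dd := Real.sqrt_pos.mpr hdetpos
  have hdd2 : dd ^ 2 = a2 * b2 - p ^ 2 := by
    rw [hdd, Real.sq_sqrt hdetpos.le, hdet]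
  have hdet' : (Lᵀ * L).det = dd ^ 2 := by rw [hdd, Real.sq_sqrt hdetpos.le]
  have hb2pos : 0 < b2 := by
    have hnn : (0:ℝ) ≤ b2 := Finset.sum_nonneg fun i _ => sq_nonneg _
    rcases hnn.lt_or_eq with h | h
    · exact h
    · exfalso
      have hz := (Finset.sum_eq_zero_iff_of_nonneg
        (fun i _ => sq_nonneg (L i 1))).mp h.symm
      have hv : (fun i => L i 1) = (0 : Fin (2*n) → ℝ) := by
        funext i
        have := hz i (Finset.mem_univ i)
        exact pow_eq_zero_iff (two_ne_zero) |>.mp this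
      have hne := hLI.ne_zero 1
      simp only [Matrix.cons_val_one, Matrix.head_cons] at hne
      exact hne hv
  have henorm : euclNorm (fun i => L i 1) = Real.sqrt b2 := by
    simp only [euclNorm]
    rfl
  set s : ℝ := Real.sqrt dd with hs
  have hspos : 0 < s := Real.sqrt_pos.mpr hddpos
  have hs2 : s ^ 2 = dd := Real.sq_sqrt hddpos.le
  have hcop : cop = Real.sqrt b2 / s := by rw [hc, henorm]
  have hcoppos : 0 < cop := by
    rw [hcop]; exact div_pos (Real.sqrt_pos.mpr hb2pos) hspos
  have hcop2 : cop ^ 2 = b2 / dd := by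
    rw [hcop, div_pow, Real.sq_sqrt hb2pos.le, hs2]
  have hfop2 : fop ^ 2 = p ^ 2 / (b2 * dd) := by
    rw [hf, henorm, div_pow, mul_pow, Real.sq_sqrt hb2pos.le, hs2, neg_pow]
    norm_num
  have hinv2 : (cop⁻¹) ^ 2 = dd / b2 := by rw [inv_pow, hcop2, inv_div]
  have hT : cop ^ 2 + fop ^ 2 + (cop⁻¹) ^ 2 = (a2 + b2) / dd := by
    rw [hcop2, hfop2, hinv2]
    field_simp
    linear_combination hdd2
  have hfrobL : frob L ^ 2 = a2 + b2 := by
    rw [frob, Real.sq_sqrt (by positivity)]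
    rw [ha2, hb2, ← Finset.sum_add_distrib]
    exact Finset.sum_congr rfl fun i _ => by rw [Fin.sum_univ_two]
  set B : Matrix (Fin 2) (Fin 2) ℝ := !![cop, fop; 0, cop⁻¹] with hB
  have hMtrace : (Bᴴ * B).trace = cop ^ 2 + fop ^ 2 + (cop⁻¹) ^ 2 := by
    simp [hB, Matrix.trace_fin_two, Matrix.mul_apply, Fin.sum_univ_two,
      Matrix.conjTranspose_apply, Matrix.vecHead, Matrix.vecTail, pow_two]
    ring
  have hdetB : B.det = 1 := by
    rw [hB, Matrix.det_fin_two_of]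
    field_simp
    ring
  have hMdet : (Bᴴ * B).det = 1 := by
    rw [Matrix.det_mul, Matrix.det_conjTranspose, star_trivial, hdetB, one_mul]
  have hBinv : B⁻¹ = !![cop⁻¹, -fop; 0, cop] := by
    rw [hB, Matrix.inv_def, Matrix.adjugate_fin_two_of, Matrix.det_fin_two_of]
    simp [mul_inv_cancel₀ hcoppos.ne']
  have hfB : frob B = Real.sqrt (cop ^ 2 + fop ^ 2 + (cop⁻¹) ^ 2) := by
    rw [hB, frob]; congr 1; simp [Fin.sum_univ_two]
  have hfBi : frob B⁻¹ = Real.sqrt (cop ^ 2 + fop ^ 2 + (cop⁻¹) ^ 2) := by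
    rw [hBinv, frob]; congr 1; simp [Fin.sum_univ_two, neg_sq]; ring_nf
  constructor
  · unfold sigmaMax sigmaMin
    set e0 := (Matrix.isHermitian_transpose_mul_self B).eigenvalues 0 with he0def
    set e1 := (Matrix.isHermitian_transpose_mul_self B).eigenvalues 1 with he1def
    have he_sum : e0 + e1 = (a2 + b2) / dd :=
      ((trace_eq_eigen2 _).symm.trans hMtrace).trans hT
    have he_prod : e0 * e1 = 1 := (det_eq_eigen2 _).symm.trans hMdet
    have he0nn : 0 ≤ e0 := Matrix.eigenvalues_conjTranspose_mul_self_nonneg B 0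
    have he1nn : 0 ≤ e1 := Matrix.eigenvalues_conjTranspose_mul_self_nonneg B 1
    have he0pos : 0 < e0 := he0nn.lt_of_ne fun h => by
      rw [← h, zero_mul] at he_prod; exact zero_ne_one he_prod
    have he1pos : 0 < e1 := he1nn.lt_of_ne fun h => by
      rw [← h, mul_zero] at he_prod; exact zero_ne_one he_prod
    set μ := max e0 e1 with hμ
    set ν := min e0 e1 with hν'
    have hμν : μ * ν = 1 := by
      rcases le_total e0 e1 with h | h
      · rw [hμ, hν', max_eq_right h, min_eq_left h, mul_comm]; exact he_prod
      · rw [hμ, hν', max_eq_left h, min_eq_right h]; exact he_prod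
    have hsum : μ + ν = (a2 + b2) / dd := by
      rw [hμ, hν', max_add_min]; exact he_sum
    have hνpos : 0 < ν := lt_min he0pos he1pos
    have hνμ : ν ≤ μ := min_le_max
    have hμnn : 0 ≤ μ := hνpos.le.trans hνμ
    have hab : a2 + b2 = dd * (μ + ν) := by
      rw [hsum]; field_simp
    have hνinv : ν = μ⁻¹ := eq_inv_of_mul_eq_one_right hμν
    have hsqrt : Real.sqrt (frob L ^ 4 - 4 * (Lᵀ * L).det) = dd * (μ - ν) := by
      have h1 : frob L ^ 4 - 4 * (Lᵀ * L).det = (dd * (μ - ν)) ^ 2 := by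
        have h2 : frob L ^ 4 = (frob L ^ 2) ^ 2 := by ring
        rw [h2, hfrobL, hdet', hab]
        linear_combination (4 * dd ^ 2) * hμν
      rw [h1, Real.sqrt_sq (mul_nonneg hddpos.le (sub_nonneg.mpr hνμ))]
    rw [hνinv, Real.sqrt_inv, div_eq_mul_inv, inv_inv, Real.mul_self_sqrt hμnn,
      hsqrt, hfrobL, hab]
    rw [hνinv] at hνμ
    field_simp
    ring
  · rw [hfB, hfBi, Real.mul_self_sqrt (by positivity), hT, hfrobL]
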